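/- arXiv:1707.01472 — 5 statements merged into one kernel-verified Lean document; each statement's English description precedes it below -/
import Mathlib

section
/- For every ε > 0, the map x ∈ M ↦ p_ε(x,·) ∈ 𝓜 is continuous with respect to the weak* topology on 𝓜. -/
open MeasureTheory Metric Set Filter Topology
open scoped ENNReal NNReal

namespace EmpStoch

variable {M : Type*} [MetricSpace M] [MeasurableSpace M] [BorelSpace M]

/-- The Dirac probability measure `δ_x` at a point `x`. -/
noncomputable def diracProb (x : M) : ProbabilityMeasure M :=
  ⟨MeasureTheory.Measure.dirac x, inferInstance⟩

/-- `dstar` is a metric on the space `𝓜` of Borel probability measures which is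
compatible with (i.e. metrizes) the weak* topology. -/
def MetrizesWeakStar (dstar : ProbabilityMeasure M → ProbabilityMeasure M → ℝ) : Prop :=
  (∀ μ ν, dstar μ ν = 0 ↔ μ = ν) ∧
  (∀ μ ν, dstar μ ν = dstar ν μ) ∧
  (∀ μ ν ξ, dstar μ ξ ≤ dstar μ ν + dstar ν ξ) ∧
  (∀ (μ : ProbabilityMeasure M) (s : Set (ProbabilityMeasure M)),
      s ∈ nhds μ ↔ ∃ ρ > (0 : ℝ), {ν | dstar ν μ < ρ} ⊆ s)

/-- `P ε x` is the transition probability `p_ε(x,·)`, i.e. for every `ε > 0`, every `x`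
and every Borel set `A`, `p_ε(x,A) = m(A ∩ B_ε(f x)) / m(B_ε(f x))`. -/
def IsTransitionKernel (f : M → M) (m : Measure M)
    (P : ℝ → M → ProbabilityMeasure M) : Prop :=
  ∀ ε > (0 : ℝ), ∀ (x : M) (A : Set M), MeasurableSet A →
    (P ε x : Measure M) A = m (A ∩ Metric.ball (f x) ε) / m (Metric.ball (f x) ε)

/-- `Lop ε` is the dual transfer operator `L*_ε : 𝓜 → 𝓜`, characterized by
`∫ φ d(L*_ε μ) = ∫ (∫ φ(y) p_ε(x,dy)) dμ(x)` for every continuous `φ`. -/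
def IsDualTransfer (P : ℝ → M → ProbabilityMeasure M)
    (Lop : ℝ → ProbabilityMeasure M → ProbabilityMeasure M) : Prop :=
  ∀ ε > (0 : ℝ), ∀ (μ : ProbabilityMeasure M) (φ : C(M, ℝ)),
    ∫ y, φ y ∂(Lop ε μ : Measure M) = ∫ x, (∫ y, φ y ∂(P ε x : Measure M)) ∂(μ : Measure M)

/-- `S ε n x` is the empiric stochastic probability
`σ_{ε,n,x} = (1/n) ∑_{j=1}^n (L*_ε)^j δ_x`. -/
def IsEmpiricStochastic (Lop : ℝ → ProbabilityMeasure M → ProbabilityMeasure M)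
    (S : ℝ → ℕ → M → ProbabilityMeasure M) : Prop :=
  ∀ ε > (0 : ℝ), ∀ n : ℕ, 1 ≤ n → ∀ x : M,
    (S ε n x : Measure M) =
      (n : ℝ≥0∞)⁻¹ • ∑ j ∈ Finset.range n, ((Lop ε)^[j + 1] (diracProb x) : Measure M)

/-- `S0 n x` is the zero-noise empiric probability `σ_{n,x} = (1/n) ∑_{j=1}^n δ_{f^j x}`. -/
def IsEmpiricZeroNoise (f : M → M) (S0 : ℕ → M → ProbabilityMeasure M) : Prop :=
  ∀ n : ℕ, 1 ≤ n → ∀ x : M,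
    (S0 n x : Measure M) =
      (n : ℝ≥0∞)⁻¹ • ∑ j ∈ Finset.range n, MeasureTheory.Measure.dirac (f^[j + 1] x)

/-- `pω_x`: the set of all weak* limits of convergent subsequences of `(σ_{n,x})_{n ≥ 1}`. -/
def pOmega (S0 : ℕ → M → ProbabilityMeasure M) (x : M) : Set (ProbabilityMeasure M) :=
  {ν | ∃ φ : ℕ → ℕ, StrictMono φ ∧ (∀ i, 1 ≤ φ i) ∧
    Tendsto (fun i => S0 (φ i) x) atTop (nhds ν)}

/-- The strong basin of statistical attraction `A_μ = {x : pω_x = {μ}}`. -/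
def strongBasin (S0 : ℕ → M → ProbabilityMeasure M) (μ : ProbabilityMeasure M) : Set M :=
  {x | pOmega S0 x = {μ}}

/-- The `ρ`-weak basin of statistical attraction
`A^ρ_μ = {x : dist*(pω_x, μ) < ρ}`. -/
def weakBasin (dstar : ProbabilityMeasure M → ProbabilityMeasure M → ℝ)
    (S0 : ℕ → M → ProbabilityMeasure M) (ρ : ℝ) (μ : ProbabilityMeasure M) : Set M :=
  {x | ∃ ν ∈ pOmega S0 x, dstar ν μ < ρ}

/-- The basin of empiric stochastic stability `Â_μ` of a measure `μ`. -/
def empBasin (dstar : ProbabilityMeasure M → ProbabilityMeasure M → ℝ)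
    (S : ℝ → ℕ → M → ProbabilityMeasure M) (μ : ProbabilityMeasure M) : Set M :=
  {x | ∀ ρ > (0 : ℝ), ∃ N : ℕ, ∀ n ≥ N, ∃ ε₀ > (0 : ℝ), ∀ ε : ℝ, 0 < ε → ε ≤ ε₀ →
    dstar (S ε n x) μ < ρ}

/-- `μ` is `f`-invariant: `f_* μ = μ`. -/
def IsInvariant (f : M → M) (μ : ProbabilityMeasure M) : Prop :=
  (μ : Measure M).map f = (μ : Measure M)

/-- An `f`-invariant measure `μ` is physical if its strong basin of statistical
attraction has positive `m`-measure. -/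
def Physical (f : M → M) (m : Measure M) (S0 : ℕ → M → ProbabilityMeasure M)
    (μ : ProbabilityMeasure M) : Prop :=
  IsInvariant f μ ∧ 0 < m (strongBasin S0 μ)

/-- An `f`-invariant measure `μ` is pseudo-physical if all its `ρ`-weak basins of
statistical attraction have positive `m`-measure. -/
def PseudoPhysical (f : M → M) (m : Measure M)
    (dstar : ProbabilityMeasure M → ProbabilityMeasure M → ℝ)
    (S0 : ℕ → M → ProbabilityMeasure M) (μ : ProbabilityMeasure M) : Prop :=
  IsInvariant f μ ∧ ∀ ρ > (0 : ℝ), 0 < m (weakBasin dstar S0 ρ μ)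

/-- A probability measure `μ` is empirically stochastically stable. -/
def EmpStochStable (m : Measure M)
    (dstar : ProbabilityMeasure M → ProbabilityMeasure M → ℝ)
    (S : ℝ → ℕ → M → ProbabilityMeasure M) (μ : ProbabilityMeasure M) : Prop :=
  ∃ A : Set M, MeasurableSet A ∧ 0 < m A ∧
    ∀ ρ > (0 : ℝ), ∃ N : ℕ, ∀ n ≥ N, ∃ ε₀ > (0 : ℝ), ∀ ε : ℝ, 0 < ε → ε ≤ ε₀ →
      ∀ᵐ x ∂m, x ∈ A → dstar (S ε n x) μ < ρ

/-- `μ` is globally empirically stochastically stable: it is empirically stochastically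
stable and its basin `Â_μ` has full `m`-measure. -/
def GloballyEmpStochStable (m : Measure M)
    (dstar : ProbabilityMeasure M → ProbabilityMeasure M → ℝ)
    (S : ℝ → ℕ → M → ProbabilityMeasure M) (μ : ProbabilityMeasure M) : Prop :=
  EmpStochStable m dstar S μ ∧ m (empBasin dstar S μ)ᶜ = 0

/-- `dist*(σ, K) := inf_{μ ∈ K} dist*(σ, μ)` (a minimum when `K` is compact). -/
noncomputable def dstarSet (dstar : ProbabilityMeasure M → ProbabilityMeasure M → ℝ)
    (σ : ProbabilityMeasure M) (K : Set (ProbabilityMeasure M)) : ℝ :=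
  sInf ((fun μ => dstar σ μ) '' K)

/-- The basin of empiric stochastic stability `Â_K` of a set of measures `K`. -/
noncomputable def empBasinSet (dstar : ProbabilityMeasure M → ProbabilityMeasure M → ℝ)
    (S : ℝ → ℕ → M → ProbabilityMeasure M) (K : Set (ProbabilityMeasure M)) : Set M :=
  {x | ∀ ρ > (0 : ℝ), ∃ N : ℕ, ∀ n ≥ N, ∃ ε₀ > (0 : ℝ), ∀ ε : ℝ, 0 < ε → ε ≤ ε₀ →
    dstarSet dstar (S ε n x) K < ρ}

/-- The strong basin of statistical attraction `A_K = {x : pω_x ⊆ K}` of a set `K`. -/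
def strongBasinSet (S0 : ℕ → M → ProbabilityMeasure M)
    (K : Set (ProbabilityMeasure M)) : Set M :=
  {x | pOmega S0 x ⊆ K}

/-- A nonempty weak*-compact set `K` of `f`-invariant measures is empirically
stochastically stable: (a) uniform approximation on a positive-measure set, and
(b) minimality with respect to the basins. -/
noncomputable def EmpStochStableSet (f : M → M) (m : Measure M)
    (dstar : ProbabilityMeasure M → ProbabilityMeasure M → ℝ)
    (S : ℝ → ℕ → M → ProbabilityMeasure M) (K : Set (ProbabilityMeasure M)) : Prop :=
  K.Nonempty ∧ IsCompact K ∧ (∀ μ ∈ K, IsInvariant f μ) ∧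
  (∃ A : Set M, MeasurableSet A ∧ 0 < m A ∧
    ∀ ρ > (0 : ℝ), ∃ N : ℕ, ∀ n ≥ N, ∃ ε₀ > (0 : ℝ), ∀ ε : ℝ, 0 < ε → ε ≤ ε₀ →
      ∀ x ∈ A, dstarSet dstar (S ε n x) K < ρ) ∧
  (∀ K' : Set (ProbabilityMeasure M), K'.Nonempty → IsCompact K' →
    (∀ μ ∈ K', IsInvariant f μ) →
    m (empBasinSet dstar S K \ empBasinSet dstar S K') = 0 → K ⊆ K')

/-- `K` is globally empirically stochastically stable: it is empirically stochastically
stable and its basin `Â_K` has full `m`-measure. -/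
noncomputable def GloballyEmpStochStableSet (f : M → M) (m : Measure M)
    (dstar : ProbabilityMeasure M → ProbabilityMeasure M → ℝ)
    (S : ℝ → ℕ → M → ProbabilityMeasure M) (K : Set (ProbabilityMeasure M)) : Prop :=
  EmpStochStableSet f m dstar S K ∧ m (empBasinSet dstar S K)ᶜ = 0

/-- Continuity of `z ↦ ∫_{B_ε(z)} φ dm` for bounded continuous `φ`, assuming spheres
have `m`-measure zero. -/
lemma tendsto_setIntegral_ball {M : Type*} [MetricSpace M] [MeasurableSpace M]
    [BorelSpace M] (m : Measure M) [IsFiniteMeasure m]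
    (hsph : ∀ (z : M) (r : ℝ), m (Metric.sphere z r) = 0)
    (ε : ℝ) (z₀ : M) (φ : M → ℝ) (hφ : Continuous φ) (C : ℝ) (hC : ∀ y, ‖φ y‖ ≤ C) :
    Tendsto (fun z => ∫ y in Metric.ball z ε, φ y ∂m) (nhds z₀)
      (nhds (∫ y in Metric.ball z₀ ε, φ y ∂m)) := by
  have key : ∀ z : M, ∫ y in Metric.ball z ε, φ y ∂m
      = ∫ y, Set.indicator (Metric.ball z ε) φ y ∂m := fun z =>
    (integral_indicator measurableSet_ball).symm
  simp only [key]
  apply tendsto_integral_filter_of_dominated_convergence (bound := fun _ => C)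
  · exact Eventually.of_forall fun z =>
      (hφ.aestronglyMeasurable).indicator measurableSet_ball
  · refine Eventually.of_forall fun z => ae_of_all _ fun y => ?_
    exact (norm_indicator_le_norm_self φ y).trans (hC y)
  · exact integrable_const C
  · -- a.e. pointwise convergence, off the sphere of radius ε around z₀
    have hz : ∀ᵐ y ∂m, dist y z₀ ≠ ε := by
      have : m {y | dist y z₀ = ε} = 0 := by
        have := hsph z₀ ε
        simpa [Metric.sphere, Set.setOf_eq_eq_singleton] using this
      exact (ae_iff.2 (by simpa using this))
    filter_upwards [hz] with y hy
    rcases lt_or_gt_of_ne hy with hlt | hgt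
    · have hev : ∀ᶠ z in nhds z₀, Set.indicator (Metric.ball z ε) φ y = φ y := by
        have hcont : Tendsto (fun z : M => dist y z) (nhds z₀) (nhds (dist y z₀)) :=
          (continuous_dist.comp (continuous_const.prodMk continuous_id)).tendsto z₀
        filter_upwards [hcont (Iio_mem_nhds hlt)] with z hz'
        exact Set.indicator_of_mem (by simpa [Metric.mem_ball] using hz') φ
      have h0 : Set.indicator (Metric.ball z₀ ε) φ y = φ y :=
        Set.indicator_of_mem (by simpa [Metric.mem_ball] using hlt) φ
      rw [h0]
      exact Tendsto.congr' (hev.mono fun z hz' => hz'.symm) tendsto_const_nhds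
    · have hev : ∀ᶠ z in nhds z₀, Set.indicator (Metric.ball z ε) φ y = 0 := by
        have hcont : Tendsto (fun z : M => dist y z) (nhds z₀) (nhds (dist y z₀)) :=
          (continuous_dist.comp (continuous_const.prodMk continuous_id)).tendsto z₀
        filter_upwards [hcont (Ioi_mem_nhds hgt)] with z hz'
        have : ε < dist y z := hz'
        exact Set.indicator_of_notMem (by simp [Metric.mem_ball, not_lt.2 (le_of_lt this)]) φ
      have h0 : Set.indicator (Metric.ball z₀ ε) φ y = 0 :=
        Set.indicator_of_notMem (by simp [Metric.mem_ball, not_lt.2 (le_of_lt hgt)]) φ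
      rw [h0]
      exact Tendsto.congr' (hev.mono fun z hz' => hz'.symm) tendsto_const_nhds

theorem statement_0 {M : Type*} [MetricSpace M] [CompactSpace M] [MeasurableSpace M]
    [BorelSpace M] (f : M → M) (hf : Continuous f)
    (m : Measure M) [IsFiniteMeasure m]
    (hball : ∀ (z : M) (r : ℝ), 0 < r → 0 < m (Metric.ball z r))
    (hsph : ∀ (z : M) (r : ℝ), m (Metric.sphere z r) = 0)
    (P : ℝ → M → ProbabilityMeasure M) (hP : IsTransitionKernel f m P) :
    ∀ ε > (0 : ℝ), Continuous fun x : M => P ε x := by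
  intro ε hε
  -- P ε x as a normalized restriction of m
  have hPx : ∀ x : M, (P ε x : Measure M)
      = (m (Metric.ball (f x) ε))⁻¹ • m.restrict (Metric.ball (f x) ε) := by
    intro x
    ext s hs
    rw [hP ε hε x s hs, Measure.smul_apply, Measure.restrict_apply hs, smul_eq_mul,
      ENNReal.div_eq_inv_mul]
  have hne : ∀ z : M, m (Metric.ball z ε) ≠ 0 := fun z => (hball z ε hε).ne'
  have hfin : ∀ z : M, m (Metric.ball z ε) ≠ ⊤ := fun z => measure_ne_top m _
  -- integral against P ε x
  have hint : ∀ (x : M) (φ : M → ℝ),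
      ∫ y, φ y ∂(P ε x : Measure M)
        = ((m (Metric.ball (f x) ε)).toReal)⁻¹ * ∫ y in Metric.ball (f x) ε, φ y ∂m := by
    intro x φ
    rw [hPx x, integral_smul_measure, ENNReal.toReal_inv, smul_eq_mul]
  rw [continuous_iff_continuousAt]
  intro x
  have h := (MeasureTheory.ProbabilityMeasure.tendsto_iff_forall_integral_tendsto
    (γ := M) (F := nhds x) (μs := fun x' : M => P ε x') (μ := P ε x))
  rw [ContinuousAt, h]
  intro φ
  simp only [hint]
  -- continuity at z₀ = f x of the normalized set integral, composed with f
  set z₀ := f x with hz₀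
  have hmeas : Tendsto (fun z : M => (m (Metric.ball z ε)).toReal) (nhds z₀)
      (nhds ((m (Metric.ball z₀ ε)).toReal)) := by
    have h1 := tendsto_setIntegral_ball m hsph ε z₀ (fun _ => (1 : ℝ)) continuous_const 1
      (fun y => by simp)
    have heq : ∀ z : M, ∫ _ in Metric.ball z ε, (1 : ℝ) ∂m = (m (Metric.ball z ε)).toReal := by
      intro z; rw [setIntegral_const]; simp [measureReal_def]
    simpa only [heq] using h1
  have hpos : (0 : ℝ) < (m (Metric.ball z₀ ε)).toReal :=
    ENNReal.toReal_pos (hne z₀) (hfin z₀)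
  have hinv : Tendsto (fun z : M => ((m (Metric.ball z ε)).toReal)⁻¹) (nhds z₀)
      (nhds (((m (Metric.ball z₀ ε)).toReal)⁻¹)) := hmeas.inv₀ hpos.ne'
  have hintg : Tendsto (fun z : M => ∫ y in Metric.ball z ε, φ y ∂m) (nhds z₀)
      (nhds (∫ y in Metric.ball z₀ ε, φ y ∂m)) :=
    tendsto_setIntegral_ball m hsph ε z₀ φ φ.continuous ‖φ‖ fun y => φ.norm_coe_le_norm y
  have hg : Tendsto (fun z : M =>
      ((m (Metric.ball z ε)).toReal)⁻¹ * ∫ y in Metric.ball z ε, φ y ∂m) (nhds z₀)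
      (nhds (((m (Metric.ball z₀ ε)).toReal)⁻¹ * ∫ y in Metric.ball z₀ ε, φ y ∂m)) :=
    hinv.mul hintg
  exact hg.comp (hf.tendsto x)

end EmpStoch
end

section
/- For every ε > 0, the dual transfer operator L*_ε : 𝓜 → 𝓜 is continuous with respect to the weak* topology on 𝓜. -/
open MeasureTheory Metric Set Filter Topology
open scoped ENNReal NNReal

namespace EmpStoch

variable {M : Type*} [MetricSpace M] [MeasurableSpace M] [BorelSpace M]

section Aux
variable {M : Type*} [MetricSpace M] [CompactSpace M] [MeasurableSpace M] [BorelSpace M]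

lemma cont_int_ball (m : Measure M) [IsFiniteMeasure m]
    (hsph : ∀ (z : M) (r : ℝ), m (Metric.sphere z r) = 0)
    {ε : ℝ} (φ : M → ℝ) (hφ : Continuous φ) :
    Continuous (fun z => ∫ y in Metric.ball z ε, φ y ∂m) := by
  set ψ := BoundedContinuousFunction.mkOfCompact ⟨φ, hφ⟩ with hψ
  have hC : ∀ y, ‖φ y‖ ≤ ‖ψ‖ := fun y => ψ.norm_coe_le_norm y
  rw [continuous_iff_continuousAt]
  intro z₀
  have heq : (fun z => ∫ y in Metric.ball z ε, φ y ∂m)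
      = fun z => ∫ y, (Metric.ball z ε).indicator φ y ∂m := by
    funext z; rw [integral_indicator measurableSet_ball]
  rw [heq]
  apply continuousAt_of_dominated (bound := fun _ => ‖ψ‖)
  · exact Eventually.of_forall fun z =>
      (hφ.aestronglyMeasurable).indicator measurableSet_ball
  · refine Eventually.of_forall fun z => ae_of_all _ fun a => ?_
    rw [norm_indicator_eq_indicator_norm]
    exact le_trans (Set.indicator_le_self' (fun _ _ => norm_nonneg _) a) (hC a)
  · exact integrable_const _
  · have h0 : ∀ᵐ a ∂m, a ∉ Metric.sphere z₀ ε :=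
      measure_eq_zero_iff_ae_notMem.mp (hsph z₀ ε)
    filter_upwards [h0] with a ha
    rcases lt_or_gt_of_ne (fun h : dist a z₀ = ε => ha h) with h | h
    · have hev : ∀ᶠ z in 𝓝 z₀, (Metric.ball z ε).indicator φ a = φ a := by
        have : ∀ᶠ z in 𝓝 z₀, dist a z < ε :=
          (continuous_const.dist continuous_id).continuousAt.eventually_lt
            continuousAt_const h
        filter_upwards [this] with z hz
        exact Set.indicator_of_mem (Metric.mem_ball.mpr hz) φ
      exact continuousAt_const.congr (EventuallyEq.symm hev)
    · have hev : ∀ᶠ z in 𝓝 z₀, (Metric.ball z ε).indicator φ a = 0 := by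
        have : ∀ᶠ z in 𝓝 z₀, ε < dist a z :=
          continuousAt_const.eventually_lt
            (continuous_const.dist continuous_id).continuousAt h
        filter_upwards [this] with z hz
        exact Set.indicator_of_notMem (by simp [Metric.mem_ball]; linarith) φ
      exact continuousAt_const.congr (EventuallyEq.symm hev)

omit [CompactSpace M] in
lemma P_eq (f : M → M) (m : Measure M) (P : ℝ → M → ProbabilityMeasure M)
    (hP : IsTransitionKernel f m P)
    {ε : ℝ} (hε : 0 < ε) (x : M) :
    (P ε x : Measure M) = (m (Metric.ball (f x) ε))⁻¹ • m.restrict (Metric.ball (f x) ε) := by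
  ext A hA
  rw [hP ε hε x A hA, Measure.smul_apply, Measure.restrict_apply hA, smul_eq_mul,
    ENNReal.div_eq_inv_mul]

omit [CompactSpace M] in
lemma integral_P (f : M → M) (m : Measure M) [IsFiniteMeasure m]
    (P : ℝ → M → ProbabilityMeasure M) (hP : IsTransitionKernel f m P)
    {ε : ℝ} (hε : 0 < ε) (x : M) (φ : M → ℝ) :
    ∫ y, φ y ∂(P ε x : Measure M)
      = (m (Metric.ball (f x) ε)).toReal⁻¹ • ∫ y in Metric.ball (f x) ε, φ y ∂m := by
  rw [P_eq f m P hP hε x, integral_smul_measure, ENNReal.toReal_inv]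

lemma cont_g (f : M → M) (hf : Continuous f) (m : Measure M) [IsFiniteMeasure m]
    (hball : ∀ (z : M) (r : ℝ), 0 < r → 0 < m (Metric.ball z r))
    (hsph : ∀ (z : M) (r : ℝ), m (Metric.sphere z r) = 0)
    (P : ℝ → M → ProbabilityMeasure M) (hP : IsTransitionKernel f m P)
    {ε : ℝ} (hε : 0 < ε) (φ : M → ℝ) (hφ : Continuous φ) :
    Continuous (fun x => ∫ y, φ y ∂(P ε x : Measure M)) := by
  have hrepr : (fun x => ∫ y, φ y ∂(P ε x : Measure M))
      = fun x => (m (Metric.ball (f x) ε)).toReal⁻¹ • ∫ y in Metric.ball (f x) ε, φ y ∂m := by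
    funext x; exact integral_P f m P hP hε x φ
  rw [hrepr]
  have hV : Continuous (fun z : M => (m (Metric.ball z ε)).toReal) := by
    have := cont_int_ball m hsph (ε := ε) (fun _ => (1 : ℝ)) continuous_const
    simpa [setIntegral_const, measureReal_def] using this
  have hVne : ∀ z : M, (m (Metric.ball z ε)).toReal ≠ 0 := fun z =>
    ne_of_gt (ENNReal.toReal_pos (ne_of_gt (hball z ε hε)) (measure_ne_top m _))
  exact ((hV.comp hf).inv₀ (fun x => hVne (f x))).smul
    ((cont_int_ball m hsph φ hφ).comp hf)

end Aux

theorem statement_1 {M : Type*} [MetricSpace M] [CompactSpace M] [MeasurableSpace M]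
    [BorelSpace M] (f : M → M) (hf : Continuous f)
    (m : Measure M) [IsFiniteMeasure m]
    (hball : ∀ (z : M) (r : ℝ), 0 < r → 0 < m (Metric.ball z r))
    (hsph : ∀ (z : M) (r : ℝ), m (Metric.sphere z r) = 0)
    (P : ℝ → M → ProbabilityMeasure M) (hP : IsTransitionKernel f m P)
    (Lop : ℝ → ProbabilityMeasure M → ProbabilityMeasure M) (hL : IsDualTransfer P Lop) :
    ∀ ε > (0 : ℝ), Continuous (Lop ε) := by
  intro ε hε
  rw [continuous_iff_continuousAt]
  intro μ
  rw [ContinuousAt, ProbabilityMeasure.tendsto_iff_forall_integral_tendsto]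
  intro φ
  have key : ∀ ν : ProbabilityMeasure M,
      ∫ y, φ y ∂(Lop ε ν : Measure M)
        = ∫ x, (∫ y, φ y ∂(P ε x : Measure M)) ∂(ν : Measure M) := fun ν =>
    hL ε hε ν φ.toContinuousMap
  simp only [key]
  have hg : Continuous (fun x => ∫ y, φ y ∂(P ε x : Measure M)) :=
    cont_g f hf m hball hsph P hP hε φ φ.continuous
  exact ProbabilityMeasure.tendsto_iff_forall_integral_tendsto.mp
    (tendsto_id (x := nhds μ)) (BoundedContinuousFunction.mkOfCompact ⟨_, hg⟩)


end EmpStoch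
end

section
/- For every ε > 0 and every integer n ≥ 1, the map x ∈ M ↦ σ_{ε,n,x} ∈ 𝓜 is continuous with respect to the weak* topology on 𝓜. -/
open MeasureTheory Metric Set Filter Topology
open scoped ENNReal NNReal

namespace EmpStoch

variable {M : Type*} [MetricSpace M] [MeasurableSpace M] [BorelSpace M]

open scoped BoundedContinuousFunction

section Aux
variable {M : Type*} [MetricSpace M] [MeasurableSpace M] [BorelSpace M]

lemma continuous_ballIntegral (m : Measure M) [IsFiniteMeasure m]
    (hsph : ∀ (z : M) (r : ℝ), m (Metric.sphere z r) = 0)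
    (ψ : M →ᵇ ℝ) (ε : ℝ) :
    Continuous fun z : M => ∫ y in Metric.ball z ε, ψ y ∂m := by
  have hrw : ∀ z : M, ∫ y in Metric.ball z ε, ψ y ∂m
      = ∫ y, (Metric.ball z ε).indicator ψ y ∂m := fun z =>
    (integral_indicator measurableSet_ball).symm
  simp_rw [hrw]
  rw [continuous_iff_continuousAt]
  intro z₀
  refine tendsto_integral_filter_of_dominated_convergence (fun _ => ‖ψ‖) ?_ ?_
    (integrable_const _) ?_
  · filter_upwards with z using
      (ψ.continuous.aestronglyMeasurable).indicator measurableSet_ball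
  · filter_upwards with z
    filter_upwards with y
    by_cases hy : y ∈ Metric.ball z ε
    · rw [Set.indicator_of_mem hy]; exact ψ.norm_coe_le_norm y
    · rw [Set.indicator_of_notMem hy]; simp
  · have hnull := hsph z₀ ε
    filter_upwards [measure_eq_zero_iff_ae_notMem.mp hnull] with y hy
    have hne : dist y z₀ ≠ ε := hy
    rcases lt_or_gt_of_ne hne with h | h
    · have hmem : y ∈ Metric.ball z₀ ε := h
      rw [Set.indicator_of_mem hmem]
      have hev : ∀ᶠ z in 𝓝 z₀, (Metric.ball z ε).indicator ψ y = ψ y := by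
        filter_upwards [Metric.isOpen_ball.mem_nhds
          (show z₀ ∈ Metric.ball y ε by rwa [Metric.mem_ball, dist_comm])] with z hz
        exact Set.indicator_of_mem (by rwa [Metric.mem_ball, dist_comm]) _
      exact tendsto_const_nhds.congr' (hev.mono fun z h => h.symm)
    · have hmem : y ∉ Metric.ball z₀ ε := by simp [Metric.mem_ball]; linarith
      rw [Set.indicator_of_notMem hmem]
      have hev : ∀ᶠ z in 𝓝 z₀, (Metric.ball z ε).indicator ψ y = 0 := by
        have hopen : IsOpen {z : M | ε < dist y z} :=
          isOpen_lt continuous_const (continuous_const.dist continuous_id)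
        filter_upwards [hopen.mem_nhds h] with z hz
        exact Set.indicator_of_notMem (by simp [Metric.mem_ball]; linarith [hz]) _
      exact tendsto_const_nhds.congr' (hev.mono fun z h => h.symm)

lemma continuous_ballMeasure (m : Measure M) [IsFiniteMeasure m]
    (hsph : ∀ (z : M) (r : ℝ), m (Metric.sphere z r) = 0) (ε : ℝ) :
    Continuous fun z : M => (m (Metric.ball z ε)).toReal := by
  have hcont := continuous_ballIntegral m hsph (BoundedContinuousFunction.const M (1:ℝ)) ε
  have hrw : ∀ z : M, ∫ y in Metric.ball z ε, (BoundedContinuousFunction.const M (1:ℝ)) y ∂m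
      = (m (Metric.ball z ε)).toReal := by
    intro z
    simp [MeasureTheory.setIntegral_const, Measure.real]
  simpa [hrw, Measure.real] using hcont

lemma P_integral (f : M → M) (m : Measure M) [IsFiniteMeasure m]
    (P : ℝ → M → ProbabilityMeasure M) (hP : IsTransitionKernel f m P)
    {ε : ℝ} (hε : 0 < ε) (x : M) (φ : M → ℝ) :
    ∫ y, φ y ∂(P ε x : Measure M)
      = ((m (Metric.ball (f x) ε)).toReal)⁻¹ • ∫ y in Metric.ball (f x) ε, φ y ∂m := by
  have hPm : (P ε x : Measure M)
      = (m (Metric.ball (f x) ε))⁻¹ • m.restrict (Metric.ball (f x) ε) := by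
    refine Measure.ext fun A hA => ?_
    rw [hP ε hε x A hA, Measure.smul_apply, Measure.restrict_apply hA, smul_eq_mul,
      ENNReal.div_eq_inv_mul]
  rw [hPm, integral_smul_measure, ENNReal.toReal_inv]

lemma continuous_Pintegral (f : M → M) (hf : Continuous f) (m : Measure M) [IsFiniteMeasure m]
    (hball : ∀ (z : M) (r : ℝ), 0 < r → 0 < m (Metric.ball z r))
    (hsph : ∀ (z : M) (r : ℝ), m (Metric.sphere z r) = 0)
    (P : ℝ → M → ProbabilityMeasure M) (hP : IsTransitionKernel f m P)
    {ε : ℝ} (hε : 0 < ε) (φ : M →ᵇ ℝ) :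
    Continuous fun x : M => ∫ y, φ y ∂(P ε x : Measure M) := by
  have h1 := (continuous_ballIntegral m hsph φ ε).comp hf
  have h2 := (continuous_ballMeasure m hsph ε).comp hf
  have hpos : ∀ x : M, ((fun z => (m (Metric.ball z ε)).toReal) ∘ f) x ≠ 0 := fun x =>
    (ENNReal.toReal_pos (hball (f x) ε hε).ne' (measure_ne_top m _)).ne'
  have hc := (h2.inv₀ hpos).mul h1
  refine hc.congr fun x => ?_
  rw [P_integral f m P hP hε x φ, smul_eq_mul]
  rfl

lemma continuous_Lop [CompactSpace M] (f : M → M) (hf : Continuous f)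
    (m : Measure M) [IsFiniteMeasure m]
    (hball : ∀ (z : M) (r : ℝ), 0 < r → 0 < m (Metric.ball z r))
    (hsph : ∀ (z : M) (r : ℝ), m (Metric.sphere z r) = 0)
    (P : ℝ → M → ProbabilityMeasure M) (hP : IsTransitionKernel f m P)
    (Lop : ℝ → ProbabilityMeasure M → ProbabilityMeasure M) (hL : IsDualTransfer P Lop)
    {ε : ℝ} (hε : 0 < ε) :
    Continuous (Lop ε) := by
  rw [continuous_iff_continuousAt]
  intro μ₀
  refine (ProbabilityMeasure.tendsto_iff_forall_integral_tendsto (Ω := M)).mpr fun φ => ?_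
  have hg : Continuous fun x : M => ∫ y, φ y ∂(P ε x : Measure M) :=
    continuous_Pintegral f hf m hball hsph P hP hε φ
  set G : M →ᵇ ℝ := BoundedContinuousFunction.mkOfCompact ⟨_, hg⟩ with hG
  have key : ∀ ν : ProbabilityMeasure M,
      ∫ y, φ y ∂(Lop ε ν : Measure M) = ∫ x, G x ∂(ν : Measure M) := fun ν =>
    hL ε hε ν φ.toContinuousMap
  simp_rw [key]
  exact (ProbabilityMeasure.continuous_integral_boundedContinuousFunction G).tendsto μ₀

lemma continuous_diracProb :
    Continuous fun x : M => (diracProb x : ProbabilityMeasure M) := by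
  rw [continuous_iff_continuousAt]
  intro x₀
  refine (ProbabilityMeasure.tendsto_iff_forall_integral_tendsto (Ω := M)).mpr fun φ => ?_
  have key : ∀ x : M, ∫ y, φ y ∂((diracProb x : ProbabilityMeasure M) : Measure M)
      = φ x := fun x => integral_dirac _ _
  simp_rw [key]
  exact (φ.continuous.tendsto x₀)

end Aux

theorem statement_2 {M : Type*} [MetricSpace M] [CompactSpace M] [MeasurableSpace M]
    [BorelSpace M] (f : M → M) (hf : Continuous f)
    (m : Measure M) [IsFiniteMeasure m]
    (hball : ∀ (z : M) (r : ℝ), 0 < r → 0 < m (Metric.ball z r))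
    (hsph : ∀ (z : M) (r : ℝ), m (Metric.sphere z r) = 0)
    (P : ℝ → M → ProbabilityMeasure M) (hP : IsTransitionKernel f m P)
    (Lop : ℝ → ProbabilityMeasure M → ProbabilityMeasure M) (hL : IsDualTransfer P Lop)
    (S : ℝ → ℕ → M → ProbabilityMeasure M) (hS : IsEmpiricStochastic Lop S) :
    ∀ ε > (0 : ℝ), ∀ n : ℕ, 1 ≤ n → Continuous fun x : M => S ε n x := by
  intro ε hε n hn
  have hLc : Continuous (Lop ε) := continuous_Lop f hf m hball hsph P hP Lop hL hε
  rw [continuous_iff_continuousAt]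
  intro x₀
  refine (ProbabilityMeasure.tendsto_iff_forall_integral_tendsto (Ω := M)).mpr fun φ => ?_
  have key : ∀ x : M, ∫ y, φ y ∂(S ε n x : Measure M)
      = ((n : ℝ≥0∞)⁻¹).toReal • ∑ j ∈ Finset.range n,
          ∫ y, φ y ∂(((Lop ε)^[j + 1] (diracProb x)) : Measure M) := by
    intro x
    rw [hS ε hε n hn x, integral_smul_measure,
      integral_finset_sum_measure (fun j _ => φ.integrable _)]
  have hcont : Continuous fun x : M => ((n : ℝ≥0∞)⁻¹).toReal • ∑ j ∈ Finset.range n,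
      ∫ y, φ y ∂(((Lop ε)^[j + 1] (diracProb x)) : Measure M) := by
    refine Continuous.fun_const_smul ?_ _
    refine continuous_finset_sum _ fun j _ => ?_
    exact (ProbabilityMeasure.continuous_integral_boundedContinuousFunction φ).comp
      ((hLc.iterate (j + 1)).comp continuous_diracProb)
  simp_rw [key]
  exact hcont.tendsto x₀


end EmpStoch
end

section
/- For every fixed integer n ≥ 1, the iterated dual transfer operator applied to Dirac measures converges uniformly to the Dirac measure at the n-th iterate: for every ρ > 0 there exists ε₀ > 0 such that dist*((L*_ε)^n δ_x, δ_{f^n(x)}) < ρ for all 0 < ε ≤ ε₀ and all x ∈ M. -/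
open MeasureTheory Metric Set Filter Topology
open scoped ENNReal NNReal

namespace EmpStoch

variable {M : Type*} [MetricSpace M] [MeasurableSpace M] [BorelSpace M]

noncomputable def bump (w : M) (η : ℝ) : C(M, ℝ) :=
  ⟨fun y => max 0 (min 1 (2 - 2 * dist y w / η)), by fun_prop⟩

lemma bump_nonneg (w : M) (η : ℝ) (y : M) : 0 ≤ bump w η y := le_max_left _ _

lemma bump_le_one (w : M) (η : ℝ) (y : M) : bump w η y ≤ 1 := by
  simp only [bump, ContinuousMap.coe_mk]
  exact max_le zero_le_one (min_le_left _ _)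

lemma bump_eq_one {w : M} {η : ℝ} (hη : 0 < η) {y : M} (h : dist y w ≤ η / 2) :
    bump w η y = 1 := by
  have h1 : (1 : ℝ) ≤ 2 - 2 * dist y w / η := by
    have h2 : 2 * dist y w / η ≤ 1 := by
      rw [div_le_one hη]; nlinarith
    linarith
  simp only [bump, ContinuousMap.coe_mk]
  rw [min_eq_left h1, max_eq_right zero_le_one]

lemma bump_eq_zero {w : M} {η : ℝ} (hη : 0 < η) {y : M} (h : η ≤ dist y w) :
    bump w η y = 0 := by
  have h1 : 2 - 2 * dist y w / η ≤ 0 := by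
    rw [sub_nonpos, le_div_iff₀ hη]
    nlinarith
  simp only [bump, ContinuousMap.coe_mk]
  rw [max_eq_left (le_trans (min_le_right _ _) h1)]

lemma compl_zero {ν : Measure M} [IsProbabilityMeasure ν] {s : Set M}
    (hs : MeasurableSet s) (h : ν s = 1) : ν sᶜ = 0 := by
  rw [measure_compl hs (measure_ne_top ν s), h, measure_univ, tsub_self]

lemma supp_lemma [CompactSpace M] (f : M → M) (hf : Continuous f)
    (m : Measure M) [IsFiniteMeasure m]
    (hball : ∀ (z : M) (r : ℝ), 0 < r → 0 < m (Metric.ball z r))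
    (P : ℝ → M → ProbabilityMeasure M) (hP : IsTransitionKernel f m P)
    (Lop : ℝ → ProbabilityMeasure M → ProbabilityMeasure M) (hL : IsDualTransfer P Lop) :
    ∀ n : ℕ, ∀ η > (0 : ℝ), ∃ ε₀ > (0 : ℝ), ∀ ε : ℝ, 0 < ε → ε ≤ ε₀ → ∀ x : M,
      ((Lop ε)^[n] (diracProb x) : Measure M) (Metric.ball (f^[n] x) η) = 1 := by
  intro n
  induction n with
  | zero =>
    intro η hη
    refine ⟨1, one_pos, fun ε hε _ x => ?_⟩
    simp only [Function.iterate_zero, id_eq, diracProb]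
    exact Measure.dirac_apply_of_mem (mem_ball_self hη)
  | succ n ih =>
    intro η hη
    obtain ⟨r, hr, hmod⟩ := Metric.uniformContinuous_iff.mp
      (CompactSpace.uniformContinuous_of_continuous hf) (η / 4) (by linarith)
    obtain ⟨ε₁, hε₁, hsupp⟩ := ih r hr
    refine ⟨min ε₁ (η / 4), lt_min hε₁ (by linarith), fun ε hε hεle x => ?_⟩
    have hεε₁ : ε ≤ ε₁ := le_trans hεle (min_le_left _ _)
    have hεη : ε ≤ η / 4 := le_trans hεle (min_le_right _ _)
    set μ := (Lop ε)^[n] (diracProb x) with hμdef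
    set w := f^[n + 1] x with hwdef
    have hw' : w = f (f^[n] x) := Function.iterate_succ_apply' f n x
    have hiter : (Lop ε)^[n + 1] (diracProb x) = Lop ε μ :=
      Function.iterate_succ_apply' (Lop ε) n (diracProb x)
    -- inner integral is 1 for points in the small ball
    have hinner : ∀ a : M, dist a (f^[n] x) < r →
        ∫ y, bump w η y ∂(P ε a : Measure M) = 1 := by
      intro a ha
      have hP1 : (P ε a : Measure M) (ball (f a) ε) = 1 := by
        rw [hP ε hε a _ measurableSet_ball, inter_self]
        exact ENNReal.div_self (hball _ _ hε).ne' (measure_ne_top m _)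
      have hc : (P ε a : Measure M) (ball (f a) ε)ᶜ = 0 :=
        compl_zero measurableSet_ball hP1
      have hae : (fun y => bump w η y) =ᵐ[(P ε a : Measure M)] fun _ => (1 : ℝ) := by
        refine measure_mono_null (fun y hy => ?_) hc
        simp only [mem_compl_iff, mem_ball, not_lt]
        by_contra hlt
        push_neg at hlt
        apply hy
        have hfa : dist (f a) w < η / 4 := by rw [hw']; exact hmod ha
        have : dist y w ≤ η / 2 := by
          have := dist_triangle y (f a) w
          linarith [lt_of_lt_of_le hlt hεη]
        exact bump_eq_one hη this
      rw [integral_congr_ae hae]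
      simp
    have hμ1 : (μ : Measure M) (ball (f^[n] x) r) = 1 := hsupp ε hε hεε₁ x
    have hμc : (μ : Measure M) (ball (f^[n] x) r)ᶜ = 0 :=
      compl_zero measurableSet_ball hμ1
    have haeo : (fun a => ∫ y, bump w η y ∂(P ε a : Measure M))
        =ᵐ[(μ : Measure M)] fun _ => (1 : ℝ) := by
      refine measure_mono_null (fun a ha => ?_) hμc
      simp only [mem_compl_iff, mem_ball, not_lt]
      by_contra hlt
      push_neg at hlt
      exact ha (hinner a hlt)
    have hint : ∫ y, bump w η y ∂((Lop ε)^[n + 1] (diracProb x) : Measure M) = 1 := by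
      rw [hiter, hL ε hε μ (bump w η), integral_congr_ae haeo]
      simp
    -- conclude measure of ball is 1
    set ν : Measure M := ((Lop ε)^[n + 1] (diracProb x) : Measure M) with hνdef
    have hint1 : Integrable (fun y => bump w η y) ν :=
      (BoundedContinuousFunction.mkOfCompact (bump w η)).integrable ν
    have hint2 : Integrable ((ball w η).indicator fun _ => (1 : ℝ)) ν :=
      (integrable_const (1 : ℝ)).indicator measurableSet_ball
    have hptle : ∀ y, bump w η y ≤ (ball w η).indicator (fun _ => (1 : ℝ)) y := by
      intro y
      by_cases hy : y ∈ ball w η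
      · rw [indicator_of_mem hy]; exact bump_le_one w η y
      · rw [indicator_of_notMem hy]
        rw [bump_eq_zero hη (by simpa [mem_ball, not_lt] using hy)]
    have hle : (1 : ℝ) ≤ (ν (ball w η)).toReal := by
      calc (1 : ℝ) = ∫ y, bump w η y ∂ν := hint.symm
        _ ≤ ∫ y, (ball w η).indicator (fun _ => (1 : ℝ)) y ∂ν :=
            integral_mono hint1 hint2 hptle
        _ = (ν (ball w η)).toReal := by
            rw [integral_indicator_const (1 : ℝ) measurableSet_ball]; simp; rfl
    have hle1 : ν (ball w η) ≤ 1 := prob_le_one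
    refine (ENNReal.toReal_eq_one_iff _).mp (le_antisymm ?_ hle)
    calc (ν (ball w η)).toReal ≤ (1 : ℝ≥0∞).toReal :=
        ENNReal.toReal_mono ENNReal.one_ne_top hle1
      _ = 1 := by simp

lemma close_lemma [CompactSpace M]
    (dstar : ProbabilityMeasure M → ProbabilityMeasure M → ℝ) (hd : MetrizesWeakStar dstar)
    (ρ : ℝ) (hρ : 0 < ρ) :
    ∃ δ > (0 : ℝ), ∀ (z : M) (σ : ProbabilityMeasure M),
      (σ : Measure M) (ball z δ) = 1 → dstar σ (diracProb z) < ρ := by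
  by_contra hcon
  push_neg at hcon
  choose z σ hσ hge using fun k : ℕ =>
    hcon (1 / ((k : ℝ) + 1)) (by positivity)
  obtain ⟨zlim, ψ, hψmono, hz⟩ := CompactSpace.tendsto_subseq z
  have hdz : Tendsto (fun k => dist (z (ψ k)) zlim) atTop (𝓝 0) :=
    tendsto_iff_dist_tendsto_zero.mp hz
  have hδ0 : Tendsto (fun k => 1 / ((ψ k : ℝ) + 1)) atTop (𝓝 0) :=
    tendsto_one_div_add_atTop_nhds_zero_nat.comp hψmono.tendsto_atTop
  have hsum : Tendsto (fun k => 1 / ((ψ k : ℝ) + 1) + dist (z (ψ k)) zlim) atTop (𝓝 0) := by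
    simpa using hδ0.add hdz
  -- weak convergence of σ (ψ k) to the Dirac at zlim
  have hconv : Tendsto (fun k => σ (ψ k)) atTop (𝓝 (diracProb zlim)) := by
    rw [ProbabilityMeasure.tendsto_iff_forall_integral_tendsto]
    intro g
    have hgz : ∫ ω, g ω ∂(diracProb zlim : Measure M) = g zlim := by
      simp [diracProb, integral_dirac]
    rw [hgz, Metric.tendsto_atTop]
    intro τ hτ
    obtain ⟨s, hs, hmod⟩ := Metric.uniformContinuous_iff.mp
      (CompactSpace.uniformContinuous_of_continuous g.continuous) (τ / 2) (by linarith)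
    have hev : ∀ᶠ k in atTop, 1 / ((ψ k : ℝ) + 1) + dist (z (ψ k)) zlim < s :=
      hsum.eventually (gt_mem_nhds hs)
    obtain ⟨N, hN⟩ := eventually_atTop.mp hev
    refine ⟨N, fun k hk => ?_⟩
    have hInt : Integrable (fun ω => g ω) ((σ (ψ k)) : Measure M) := g.integrable _
    have hsub : ∫ ω, g ω ∂((σ (ψ k)) : Measure M) - g zlim
        = ∫ ω, (g ω - g zlim) ∂((σ (ψ k)) : Measure M) := by
      rw [integral_sub hInt (integrable_const _)]
      simp
    have hc : ((σ (ψ k)) : Measure M) (ball (z (ψ k)) (1 / ((ψ k : ℝ) + 1)))ᶜ = 0 :=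
      compl_zero measurableSet_ball (hσ (ψ k))
    have hb : ∀ᵐ ω ∂((σ (ψ k)) : Measure M), |g ω - g zlim| ≤ τ / 2 := by
      rw [ae_iff]
      refine measure_mono_null (fun ω hω => ?_) hc
      simp only [mem_setOf_eq, not_le] at hω
      simp only [mem_compl_iff, mem_ball, not_lt]
      by_contra hlt
      push_neg at hlt
      have hdist : dist ω zlim < s := by
        have h3 := dist_triangle ω (z (ψ k)) zlim
        have h4 := hN k hk
        linarith
      have h5 := hmod hdist
      rw [Real.dist_eq] at h5
      linarith
    have habs : |∫ ω, (g ω - g zlim) ∂((σ (ψ k)) : Measure M)| ≤ τ / 2 := by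
      calc |∫ ω, (g ω - g zlim) ∂((σ (ψ k)) : Measure M)|
          ≤ ∫ ω, |g ω - g zlim| ∂((σ (ψ k)) : Measure M) := by
            simpa using norm_integral_le_integral_norm
              (μ := ((σ (ψ k)) : Measure M)) (fun ω => g ω - g zlim)
        _ ≤ ∫ _, (τ / 2) ∂((σ (ψ k)) : Measure M) :=
            integral_mono_ae ((hInt.sub (integrable_const _)).abs) (integrable_const _) hb
        _ = τ / 2 := by simp
    rw [Real.dist_eq, hsub]
    linarith [abs_nonneg (∫ ω, (g ω - g zlim) ∂((σ (ψ k)) : Measure M)), habs]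
  -- Dirac measures converge
  have hconv2 : Tendsto (fun k => diracProb (z (ψ k))) atTop (𝓝 (diracProb zlim)) := by
    rw [ProbabilityMeasure.tendsto_iff_forall_integral_tendsto]
    intro g
    have key : ∀ y : M, ∫ ω, g ω ∂(diracProb y : Measure M) = g y := by
      intro y; simp [diracProb, integral_dirac]
    simp only [key]
    exact (g.continuous.tendsto zlim).comp hz
  have hnhd : {ν | dstar ν (diracProb zlim) < ρ / 2} ∈ nhds (diracProb zlim) :=
    (hd.2.2.2 _ _).mpr ⟨ρ / 2, by linarith, subset_rfl⟩
  have h1 : ∀ᶠ k in atTop, dstar (σ (ψ k)) (diracProb zlim) < ρ / 2 := hconv hnhd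
  have h2 : ∀ᶠ k in atTop, dstar (diracProb (z (ψ k))) (diracProb zlim) < ρ / 2 := hconv2 hnhd
  obtain ⟨k, hk1, hk2⟩ := (h1.and h2).exists
  have htri := hd.2.2.1 (σ (ψ k)) (diracProb zlim) (diracProb (z (ψ k)))
  have hsym := hd.2.1 (diracProb zlim) (diracProb (z (ψ k)))
  have hge' := hge (ψ k)
  linarith

theorem statement_4 {M : Type*} [MetricSpace M] [CompactSpace M] [MeasurableSpace M]
    [BorelSpace M] (f : M → M) (hf : Continuous f)
    (m : Measure M) [IsFiniteMeasure m]
    (hball : ∀ (z : M) (r : ℝ), 0 < r → 0 < m (Metric.ball z r))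
    (hsph : ∀ (z : M) (r : ℝ), m (Metric.sphere z r) = 0)
    (P : ℝ → M → ProbabilityMeasure M) (hP : IsTransitionKernel f m P)
    (Lop : ℝ → ProbabilityMeasure M → ProbabilityMeasure M) (hL : IsDualTransfer P Lop)
    (dstar : ProbabilityMeasure M → ProbabilityMeasure M → ℝ) (hd : MetrizesWeakStar dstar) :
    ∀ n : ℕ, 1 ≤ n → ∀ ρ > (0 : ℝ), ∃ ε₀ > (0 : ℝ), ∀ ε : ℝ, 0 < ε → ε ≤ ε₀ →
      ∀ x : M, dstar ((Lop ε)^[n] (diracProb x)) (diracProb (f^[n] x)) < ρ := by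
  intro n hn ρ hρ
  obtain ⟨δ, hδ, hclose⟩ := close_lemma dstar hd ρ hρ
  obtain ⟨ε₀, hε₀, hsupp⟩ := supp_lemma f hf m hball P hP Lop hL n δ hδ
  exact ⟨ε₀, hε₀, fun ε hε hεle x => hclose (f^[n] x) _ (hsupp ε hε hεle x)⟩

end EmpStoch
end

section
/- If K is a nonempty weak*-compact set of f-invariant probability measures that is empirically stochastically stable, then every measure μ ∈ K is pseudo-physical. -/
open MeasureTheory Metric Set Filter Topology
open scoped ENNReal NNReal

namespace EmpStoch

variable {M : Type*} [MetricSpace M] [MeasurableSpace M] [BorelSpace M]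

section AuxMetric

variable {M : Type*} [MetricSpace M] [MeasurableSpace M] [BorelSpace M]
variable {dstar : ProbabilityMeasure M → ProbabilityMeasure M → ℝ}

lemma MW.self (hd : MetrizesWeakStar dstar) (μ : ProbabilityMeasure M) : dstar μ μ = 0 :=
  (hd.1 μ μ).mpr rfl

lemma MW.nonneg (hd : MetrizesWeakStar dstar) (μ ν : ProbabilityMeasure M) : 0 ≤ dstar μ ν := by
  have h := hd.2.2.1 μ ν μ
  rw [MW.self hd, hd.2.1 ν μ] at h
  linarith

lemma MW.ball_mem_nhds (hd : MetrizesWeakStar dstar) (μ : ProbabilityMeasure M) {ρ : ℝ}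
    (hρ : 0 < ρ) : {ν | dstar ν μ < ρ} ∈ nhds μ :=
  (hd.2.2.2 μ _).mpr ⟨ρ, hρ, subset_rfl⟩

lemma MW.tendsto_of_dist (hd : MetrizesWeakStar dstar) {ι : Type*} {F : Filter ι}
    {u : ι → ProbabilityMeasure M} {ν : ProbabilityMeasure M}
    (h : ∀ ρ > (0:ℝ), ∀ᶠ i in F, dstar (u i) ν < ρ) : Tendsto u F (nhds ν) := by
  rw [Filter.tendsto_def]
  intro s hs
  obtain ⟨ρ, hρ, hsub⟩ := (hd.2.2.2 ν s).mp hs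
  exact Filter.mem_of_superset (h ρ hρ) fun i hi => hsub hi

lemma MW.dist_of_tendsto (hd : MetrizesWeakStar dstar) {ι : Type*} {F : Filter ι}
    {u : ι → ProbabilityMeasure M} {ν : ProbabilityMeasure M}
    (h : Tendsto u F (nhds ν)) : ∀ ρ > (0:ℝ), ∀ᶠ i in F, dstar (u i) ν < ρ :=
  fun _ hρ => h (MW.ball_mem_nhds hd ν hρ)

lemma dstarSet_nonneg (hd : MetrizesWeakStar dstar) (σ : ProbabilityMeasure M)
    {K : Set (ProbabilityMeasure M)} (hK : K.Nonempty) : 0 ≤ dstarSet dstar σ K :=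
  le_csInf (hK.image _) (by rintro _ ⟨μ, _, rfl⟩; exact MW.nonneg hd σ μ)

lemma dstarSet_le (hd : MetrizesWeakStar dstar) (σ : ProbabilityMeasure M)
    {K : Set (ProbabilityMeasure M)} {μ : ProbabilityMeasure M} (hμ : μ ∈ K) :
    dstarSet dstar σ K ≤ dstar σ μ :=
  csInf_le ⟨0, by rintro _ ⟨ν, _, rfl⟩; exact MW.nonneg hd σ ν⟩ ⟨μ, hμ, rfl⟩

lemma dstarSet_triangle (hd : MetrizesWeakStar dstar) (σ τ : ProbabilityMeasure M)
    {K : Set (ProbabilityMeasure M)} (hK : K.Nonempty) :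
    dstarSet dstar σ K ≤ dstar σ τ + dstarSet dstar τ K := by
  have h : dstarSet dstar σ K - dstar σ τ ≤ dstarSet dstar τ K := by
    apply le_csInf (hK.image _)
    rintro _ ⟨μ, hμ, rfl⟩
    have h1 := dstarSet_le hd σ hμ
    have h2 := hd.2.2.1 σ τ μ
    linarith
  linarith

omit [MetricSpace M] [BorelSpace M] in
lemma exists_lt_dstarSet_add (σ : ProbabilityMeasure M)
    {K : Set (ProbabilityMeasure M)} (hK : K.Nonempty) {η : ℝ} (hη : 0 < η) :
    ∃ μ ∈ K, dstar σ μ < dstarSet dstar σ K + η := by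
  obtain ⟨a, ⟨μ, hμ, rfl⟩, ha⟩ := Real.lt_sInf_add_pos (hK.image _) hη
  exact ⟨μ, hμ, ha⟩

lemma MW.firstCountable (hd : MetrizesWeakStar dstar) :
    FirstCountableTopology (ProbabilityMeasure M) := by
  constructor
  intro μ
  have hb : (nhds μ).HasBasis (fun _ : ℕ => True)
      (fun n => {ν | dstar ν μ < 1 / (n + 1)}) := by
    constructor
    intro s
    rw [hd.2.2.2 μ s]
    constructor
    · rintro ⟨ρ, hρ, hsub⟩
      obtain ⟨n, hn⟩ := exists_nat_one_div_lt hρ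
      exact ⟨n, trivial, fun ν hν => hsub (lt_trans hν hn)⟩
    · rintro ⟨n, -, hsub⟩
      exact ⟨1 / (n + 1), by positivity, hsub⟩
  exact hb.isCountablyGenerated

/-- Extraction of a convergent subsequence (with indices ≥ 1) from a sequence approaching a
compact set `K`. -/
lemma MW.extraction (hd : MetrizesWeakStar dstar) {K : Set (ProbabilityMeasure M)}
    (hK : K.Nonempty) (hKc : IsCompact K) (u : ℕ → ProbabilityMeasure M)
    (hu : ∀ ρ > (0:ℝ), ∀ᶠ n in atTop, dstarSet dstar (u n) K ≤ ρ) :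
    ∃ ν ∈ K, ∃ φ : ℕ → ℕ, StrictMono φ ∧ (∀ i, 1 ≤ φ i) ∧
      Tendsto (fun i => u (φ i)) atTop (nhds ν) := by
  haveI := MW.firstCountable hd
  choose v hvK hv using fun n =>
    exists_lt_dstarSet_add (dstar := dstar) (u n) hK (η := 1 / (n + 1)) (by positivity)
  obtain ⟨ν, hν, ψ, hψ, hto⟩ := hKc.tendsto_subseq hvK
  set w : ℕ → ℕ := fun i => ψ (i + 1) with hw
  have hwmono : StrictMono w := fun a b hab => hψ (by omega)
  have hwge' : ∀ i, i + 1 ≤ w i := fun i => hψ.le_apply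
  have hwge : ∀ i, 1 ≤ w i := fun i => le_trans (by omega) (hwge' i)
  refine ⟨ν, hν, w, hwmono, hwge, ?_⟩
  apply MW.tendsto_of_dist hd
  intro ρ hρ
  have h1 : ∀ᶠ i in atTop, dstarSet dstar (u (w i)) K ≤ ρ / 4 := by
    obtain ⟨N, hN⟩ := (Filter.eventually_atTop).mp (hu (ρ / 4) (by linarith))
    exact Filter.eventually_atTop.mpr ⟨N, fun i hi => hN _ (le_trans hi (by have := hwge' i; omega))⟩
  have h2 : ∀ᶠ i in atTop, (1 : ℝ) / (w i + 1) ≤ ρ / 4 := by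
    obtain ⟨n, hn⟩ := exists_nat_one_div_lt (show (0:ℝ) < ρ / 4 by linarith)
    refine Filter.eventually_atTop.mpr ⟨n, fun i hi => ?_⟩
    have hni : (n : ℝ) + 1 ≤ (w i : ℝ) + 1 := by
      have h := hwge' i
      have : n ≤ w i := by omega
      exact_mod_cast Nat.succ_le_succ this
    calc (1:ℝ) / (w i + 1) ≤ 1 / (n + 1) := by
          apply one_div_le_one_div_of_le (by positivity) hni
      _ ≤ ρ / 4 := le_of_lt hn
  have h3 : ∀ᶠ i in atTop, dstar (v (w i)) ν < ρ / 4 := by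
    have hcomp : Tendsto (fun i => v (w i)) atTop (nhds ν) :=
      (hto.comp (tendsto_add_atTop_nat 1))
    exact MW.dist_of_tendsto hd hcomp (ρ / 4) (by linarith)
  filter_upwards [h1, h2, h3] with i hi1 hi2 hi3
  have htri := hd.2.2.1 (u (w i)) (v (w i)) ν
  have hv' := hv (w i)
  linarith

end AuxMetric
section AuxAnalytic

variable {M : Type*} [MetricSpace M] [CompactSpace M] [MeasurableSpace M] [BorelSpace M]
variable {f : M → M} {m : Measure M}
variable {P : ℝ → M → ProbabilityMeasure M}
variable {Lop : ℝ → ProbabilityMeasure M → ProbabilityMeasure M}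

omit [CompactSpace M] [BorelSpace M] in
lemma P_eq_restrict (hP : IsTransitionKernel f m P) {ε : ℝ} (hε : 0 < ε) (x : M) :
    (P ε x : Measure M) = (m (Metric.ball (f x) ε))⁻¹ • m.restrict (Metric.ball (f x) ε) := by
  ext A hA
  rw [hP ε hε x A hA, Measure.smul_apply, Measure.restrict_apply hA, smul_eq_mul,
    ENNReal.div_eq_inv_mul]

omit [CompactSpace M] in
lemma P_ae_ball (hP : IsTransitionKernel f m P) {ε : ℝ} (hε : 0 < ε) (x : M) :
    ∀ᵐ y ∂(P ε x : Measure M), y ∈ Metric.ball (f x) ε := by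
  rw [MeasureTheory.ae_iff]
  have hA : MeasurableSet {y | ¬ y ∈ Metric.ball (f x) ε} := by
    have he : {y | ¬ y ∈ Metric.ball (f x) ε} = (Metric.ball (f x) ε)ᶜ := rfl
    rw [he]
    exact measurableSet_ball.compl
  have h := hP ε hε x _ hA
  rw [h]
  have : {y | ¬ y ∈ Metric.ball (f x) ε} ∩ Metric.ball (f x) ε = ∅ := by
    ext y; simp (config := {contextual := true})
  rw [this, measure_empty, ENNReal.zero_div]

lemma integrable_continuous (φ : C(M, ℝ)) (μ : Measure M) [IsFiniteMeasure μ] :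
    Integrable φ μ := by
  have h := BoundedContinuousFunction.integrable μ (BoundedContinuousFunction.mkOfCompact φ)
  exact h

/-- Average estimate: the `P ε x`-integral of `φ` is within `δ` of `c`
if `φ` is within `δ` of `c` on the ball. -/
lemma integral_P_sub (hP : IsTransitionKernel f m P) {ε : ℝ} (hε : 0 < ε) (x : M)
    (φ : C(M, ℝ)) {c δ : ℝ}
    (hb : ∀ y ∈ Metric.ball (f x) ε, |φ y - c| ≤ δ) :
    |∫ y, φ y ∂(P ε x : Measure M) - c| ≤ δ := by
  have hint : Integrable φ (P ε x : Measure M) := integrable_continuous φ _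
  have heq : ∫ y, φ y ∂(P ε x : Measure M) - c
      = ∫ y, (φ y - c) ∂(P ε x : Measure M) := by
    rw [integral_sub hint (integrable_const c), integral_const]
    simp
  rw [heq]
  have hae : ∀ᵐ y ∂(P ε x : Measure M), ‖φ y - c‖ ≤ δ :=
    (P_ae_ball hP hε x).mono fun y hy => by simpa [Real.norm_eq_abs] using hb y hy
  have := norm_integral_le_of_norm_le_const (μ := (P ε x : Measure M)) hae
  simpa [Real.norm_eq_abs] using this

/-- Continuity in the center of the integral of `φ` over a ball, given null spheres. -/
lemma continuous_setIntegral_ball [IsFiniteMeasure m]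
    (hsph : ∀ (z : M) (r : ℝ), m (Metric.sphere z r) = 0)
    (φ : C(M, ℝ)) (ε : ℝ) :
    Continuous fun z => ∫ y in Metric.ball z ε, φ y ∂m := by
  rw [continuous_iff_seqContinuous]
  intro zs z hz
  have hform : ∀ w : M, ∫ y in Metric.ball w ε, φ y ∂m
      = ∫ y, (Metric.ball w ε).indicator φ y ∂m := by
    intro w; rw [integral_indicator measurableSet_ball]
  show Tendsto (fun n => ∫ y in Metric.ball (zs n) ε, φ y ∂m) atTop
      (nhds (∫ y in Metric.ball z ε, φ y ∂m))
  simp only [hform]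
  apply tendsto_integral_of_dominated_convergence
    (bound := fun _ => ‖BoundedContinuousFunction.mkOfCompact φ‖)
  · intro n
    exact ((φ.continuous.stronglyMeasurable).indicator measurableSet_ball).aestronglyMeasurable
  · exact integrable_const _
  · intro n
    refine Filter.Eventually.of_forall fun a => ?_
    calc ‖(Metric.ball (zs n) ε).indicator (⇑φ) a‖ ≤ ‖φ a‖ := norm_indicator_le_norm_self _ _
      _ ≤ ‖BoundedContinuousFunction.mkOfCompact φ‖ :=
        BoundedContinuousFunction.norm_coe_le_norm (BoundedContinuousFunction.mkOfCompact φ) a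
  · have hae : ∀ᵐ a ∂m, a ∉ Metric.sphere z ε := by
      rw [MeasureTheory.ae_iff]
      simp only [not_not]
      exact hsph z ε
    refine hae.mono fun a ha => ?_
    have hda : Tendsto (fun n => dist a (zs n)) atTop (nhds (dist a z)) :=
      tendsto_const_nhds.dist hz
    have hne : dist a z ≠ ε := ha
    rcases lt_or_gt_of_ne hne with hlt | hgt
    · have hev : ∀ᶠ n in atTop, dist a (zs n) < ε := hda.eventually_lt_const hlt
      have heq : ∀ᶠ n in atTop,
          (Metric.ball (zs n) ε).indicator (⇑φ) a = φ a := by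
        refine hev.mono fun n hn => ?_
        rw [Set.indicator_of_mem (Metric.mem_ball.mpr hn)]
      have : (Metric.ball z ε).indicator (⇑φ) a = φ a :=
        Set.indicator_of_mem (Metric.mem_ball.mpr hlt) _
      rw [this]
      exact (tendsto_congr' heq).mpr tendsto_const_nhds
    · have hev : ∀ᶠ n in atTop, ε < dist a (zs n) := hda.eventually_const_lt hgt
      have heq : ∀ᶠ n in atTop,
          (Metric.ball (zs n) ε).indicator (⇑φ) a = 0 := by
        refine hev.mono fun n hn => ?_
        rw [Set.indicator_of_notMem]
        intro hmem
        exact absurd (Metric.mem_ball.mp hmem) (not_lt.mpr hn.le)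
      have : (Metric.ball z ε).indicator (⇑φ) a = 0 := by
        rw [Set.indicator_of_notMem]
        intro hmem
        exact absurd (Metric.mem_ball.mp hmem) (not_lt.mpr hgt.le)
      rw [this]
      exact (tendsto_congr' heq).mpr tendsto_const_nhds

/-- Continuity of `x ↦ ∫ φ d(P ε x)`. -/
lemma continuous_Tphi [IsFiniteMeasure m] (hf : Continuous f)
    (hball : ∀ (z : M) (r : ℝ), 0 < r → 0 < m (Metric.ball z r))
    (hsph : ∀ (z : M) (r : ℝ), m (Metric.sphere z r) = 0)
    (hP : IsTransitionKernel f m P) {ε : ℝ} (hε : 0 < ε) (φ : C(M, ℝ)) :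
    Continuous fun x => ∫ y, φ y ∂(P ε x : Measure M) := by
  have heq : ∀ x : M, ∫ y, φ y ∂(P ε x : Measure M)
      = (∫ y in Metric.ball (f x) ε, φ y ∂m) / (m (Metric.ball (f x) ε)).toReal := by
    intro x
    rw [P_eq_restrict hP hε x, integral_smul_measure, ENNReal.toReal_inv, smul_eq_mul,
      div_eq_inv_mul]
  simp only [heq]
  apply Continuous.div
  · exact (continuous_setIntegral_ball hsph φ ε).comp hf
  · have hone : Continuous fun z : M => ∫ y in Metric.ball z ε, (1:ℝ) ∂m :=
      continuous_setIntegral_ball hsph ⟨fun _ => (1:ℝ), continuous_const⟩ ε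
    have heq2 : (fun x : M => (m (Metric.ball (f x) ε)).toReal)
        = (fun z : M => ∫ y in Metric.ball z ε, (1:ℝ) ∂m) ∘ f := by
      funext x
      simp only [Function.comp_apply, setIntegral_const, smul_eq_mul, mul_one]
      rfl
    rw [heq2]
    exact hone.comp hf
  · intro x
    have h1 : 0 < m (Metric.ball (f x) ε) := hball (f x) ε hε
    have h2 : m (Metric.ball (f x) ε) ≠ ⊤ := measure_ne_top m _
    exact ne_of_gt (ENNReal.toReal_pos (ne_of_gt h1) h2)

end AuxAnalytic
section AuxIterate

variable {M : Type*} [MetricSpace M] [CompactSpace M] [MeasurableSpace M] [BorelSpace M]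
variable {f : M → M} {m : Measure M} [IsFiniteMeasure m]
variable {P : ℝ → M → ProbabilityMeasure M}
variable {Lop : ℝ → ProbabilityMeasure M → ProbabilityMeasure M}

/-- Uniform estimate on iterates of the dual transfer operator applied to Dirac measures. -/
lemma iterate_est (hf : Continuous f)
    (hball : ∀ (z : M) (r : ℝ), 0 < r → 0 < m (Metric.ball z r))
    (hsph : ∀ (z : M) (r : ℝ), m (Metric.sphere z r) = 0)
    (hP : IsTransitionKernel f m P) (hL : IsDualTransfer P Lop) (j : ℕ) :
    ∀ (φ : C(M, ℝ)) (δ : ℝ), 0 < δ → ∃ ε₀ > (0:ℝ), ∀ ε : ℝ, 0 < ε → ε ≤ ε₀ → ∀ x : M,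
      |∫ y, φ y ∂((Lop ε)^[j] (diracProb x) : Measure M) - φ (f^[j] x)| ≤ δ := by
  induction j with
  | zero =>
    intro φ δ hδ
    refine ⟨1, one_pos, fun ε hε hε' x => ?_⟩
    have h1 : ((Lop ε)^[0] (diracProb x) : Measure M) = Measure.dirac x := rfl
    rw [h1, integral_dirac' _ _ φ.continuous.stronglyMeasurable]
    simp [le_of_lt hδ]
  | succ j ih =>
    intro φ δ hδ
    obtain ⟨ε₁, hε₁, hφu⟩ := Metric.uniformContinuous_iff.mp
      (CompactSpace.uniformContinuous_of_continuous φ.continuous) (δ / 2) (by linarith)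
    obtain ⟨ε₂, hε₂, hIH⟩ := ih (φ.comp ⟨f, hf⟩) (δ / 2) (by linarith)
    refine ⟨min ε₁ ε₂, lt_min hε₁ hε₂, fun ε hε hεle x => ?_⟩
    have hεle1 : ε ≤ ε₁ := le_trans hεle (min_le_left _ _)
    have hεle2 : ε ≤ ε₂ := le_trans hεle (min_le_right _ _)
    set ν : ProbabilityMeasure M := (Lop ε)^[j] (diracProb x) with hν
    have hstep : (Lop ε)^[j + 1] (diracProb x) = Lop ε ν := Function.iterate_succ_apply' _ _ _
    have hLι := hL ε hε ν φ
    set T : M → ℝ := fun z => ∫ y, φ y ∂(P ε z : Measure M) with hT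
    have hTcont : Continuous T := continuous_Tphi hf hball hsph hP hε φ
    have hTint : Integrable T (ν : Measure M) := integrable_continuous ⟨T, hTcont⟩ _
    have hint2 : Integrable (fun z => φ (f z)) (ν : Measure M) :=
      integrable_continuous (φ.comp ⟨f, hf⟩) _
    have hpt : ∀ z : M, |T z - φ (f z)| ≤ δ / 2 := by
      intro z
      apply integral_P_sub hP hε z φ
      intro y hy
      have hdy : dist y (f z) < ε₁ := lt_of_lt_of_le (Metric.mem_ball.mp hy) hεle1
      have := hφu hdy
      rw [Real.dist_eq] at this
      exact le_of_lt this
    have h1 : |∫ z, T z ∂(ν : Measure M) - ∫ z, φ (f z) ∂(ν : Measure M)| ≤ δ / 2 := by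
      rw [← integral_sub hTint hint2]
      have hb := norm_integral_le_of_norm_le_const (μ := (ν : Measure M))
        (f := fun z => T z - φ (f z)) (C := δ / 2)
        (Filter.Eventually.of_forall fun z => by simpa [Real.norm_eq_abs] using hpt z)
      simpa [Real.norm_eq_abs] using hb
    have h2 := hIH ε hε hεle2 x
    have h2' : |∫ z, φ (f z) ∂(ν : Measure M) - φ (f (f^[j] x))| ≤ δ / 2 := by
      simpa using h2
    have hgoal : ∫ y, φ y ∂((Lop ε)^[j + 1] (diracProb x) : Measure M)
        = ∫ z, T z ∂(ν : Measure M) := by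
      rw [hstep]
      exact hLι
    rw [hgoal, Function.iterate_succ_apply']
    calc |∫ z, T z ∂(ν : Measure M) - φ (f (f^[j] x))|
        ≤ |∫ z, T z ∂(ν : Measure M) - ∫ z, φ (f z) ∂(ν : Measure M)|
          + |∫ z, φ (f z) ∂(ν : Measure M) - φ (f (f^[j] x))| := abs_sub_le _ _ _
      _ ≤ δ / 2 + δ / 2 := add_le_add h1 h2'
      _ = δ := by ring

/-- For fixed `j`, `x`, the integral of `φ` against `(L*_ε)^j δ_x` tends to `φ(f^j x)`
as `ε → 0⁺`. -/
lemma tendsto_integral_iter (hf : Continuous f)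
    (hball : ∀ (z : M) (r : ℝ), 0 < r → 0 < m (Metric.ball z r))
    (hsph : ∀ (z : M) (r : ℝ), m (Metric.sphere z r) = 0)
    (hP : IsTransitionKernel f m P) (hL : IsDualTransfer P Lop) (j : ℕ) (φ : C(M, ℝ)) (x : M) :
    Tendsto (fun ε => ∫ y, φ y ∂((Lop ε)^[j] (diracProb x) : Measure M))
      (nhdsWithin (0:ℝ) (Set.Ioi 0)) (nhds (φ (f^[j] x))) := by
  rw [Metric.tendsto_nhds]
  intro δ hδ
  obtain ⟨ε₀, hε₀, hest⟩ := iterate_est hf hball hsph hP hL j φ (δ / 2) (by linarith)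
  have hIoc : Set.Ioc (0:ℝ) ε₀ ∈ nhdsWithin (0:ℝ) (Set.Ioi 0) :=
    Ioc_mem_nhdsGT_of_mem ⟨le_refl 0, hε₀⟩
  filter_upwards [hIoc] with ε hε
  have := hest ε hε.1 hε.2 x
  rw [Real.dist_eq]
  linarith

end AuxIterate
section AuxConvergence

variable {M : Type*} [MetricSpace M] [CompactSpace M] [MeasurableSpace M] [BorelSpace M]
variable {f : M → M} {m : Measure M} [IsFiniteMeasure m]
variable {P : ℝ → M → ProbabilityMeasure M}
variable {Lop : ℝ → ProbabilityMeasure M → ProbabilityMeasure M}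
variable {S : ℝ → ℕ → M → ProbabilityMeasure M}
variable {S0 : ℕ → M → ProbabilityMeasure M}
variable {dstar : ProbabilityMeasure M → ProbabilityMeasure M → ℝ}

/-- As `ε → 0⁺`, the empiric stochastic probability converges to the zero-noise one. -/
lemma tendsto_S_eps (hf : Continuous f)
    (hball : ∀ (z : M) (r : ℝ), 0 < r → 0 < m (Metric.ball z r))
    (hsph : ∀ (z : M) (r : ℝ), m (Metric.sphere z r) = 0)
    (hP : IsTransitionKernel f m P) (hL : IsDualTransfer P Lop)
    (hS : IsEmpiricStochastic Lop S) (hS0 : IsEmpiricZeroNoise f S0)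
    {n : ℕ} (hn : 1 ≤ n) (x : M) :
    Tendsto (fun ε => S ε n x) (nhdsWithin (0:ℝ) (Set.Ioi 0)) (nhds (S0 n x)) := by
  rw [ProbabilityMeasure.tendsto_iff_forall_integral_tendsto]
  intro ψ
  have hψint : ∀ μ : Measure M, IsProbabilityMeasure μ → Integrable ψ μ := by
    intro μ hμ
    exact ψ.integrable μ
  have htarget : ∫ ω, ψ ω ∂(S0 n x : Measure M)
      = ((n : ℝ≥0∞)⁻¹).toReal • ∑ j ∈ Finset.range n, ψ (f^[j + 1] x) := by
    rw [hS0 n hn x, integral_smul_measure,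
      integral_finset_sum_measure (fun j _ => hψint _ (Measure.dirac.isProbabilityMeasure))]
    congr 1
    refine Finset.sum_congr rfl fun j _ => ?_
    exact integral_dirac' _ _ ψ.continuous.stronglyMeasurable
  rw [htarget]
  have hev : ∀ᶠ ε in nhdsWithin (0:ℝ) (Set.Ioi 0),
      ∫ ω, ψ ω ∂(S ε n x : Measure M)
        = ((n : ℝ≥0∞)⁻¹).toReal •
            ∑ j ∈ Finset.range n, ∫ ω, ψ ω ∂((Lop ε)^[j + 1] (diracProb x) : Measure M) := by
    filter_upwards [self_mem_nhdsWithin] with ε hε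
    rw [hS ε hε n hn x, integral_smul_measure,
      integral_finset_sum_measure (fun j _ => hψint _ inferInstance)]
  rw [tendsto_congr' hev]
  apply Filter.Tendsto.const_smul
  apply tendsto_finset_sum
  intro j _
  exact tendsto_integral_iter hf hball hsph hP hL (j + 1) ψ.toContinuousMap x

/-- Distance version of the previous lemma. -/
lemma eventually_dist_S_S0 (hd : MetrizesWeakStar dstar) (hf : Continuous f)
    (hball : ∀ (z : M) (r : ℝ), 0 < r → 0 < m (Metric.ball z r))
    (hsph : ∀ (z : M) (r : ℝ), m (Metric.sphere z r) = 0)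
    (hP : IsTransitionKernel f m P) (hL : IsDualTransfer P Lop)
    (hS : IsEmpiricStochastic Lop S) (hS0 : IsEmpiricZeroNoise f S0)
    {n : ℕ} (hn : 1 ≤ n) (x : M) {η : ℝ} (hη : 0 < η) :
    ∀ᶠ ε in nhdsWithin (0:ℝ) (Set.Ioi 0), dstar (S ε n x) (S0 n x) < η :=
  MW.dist_of_tendsto hd (tendsto_S_eps hf hball hsph hP hL hS hS0 hn x) η hη

/-- If `x` lies in the empiric stochastic basin of `K`, then the zero-noise empiric
probabilities approach `K`. -/
lemma eventually_dstarSet_S0 (hd : MetrizesWeakStar dstar) (hf : Continuous f)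
    (hball : ∀ (z : M) (r : ℝ), 0 < r → 0 < m (Metric.ball z r))
    (hsph : ∀ (z : M) (r : ℝ), m (Metric.sphere z r) = 0)
    (hP : IsTransitionKernel f m P) (hL : IsDualTransfer P Lop)
    (hS : IsEmpiricStochastic Lop S) (hS0 : IsEmpiricZeroNoise f S0)
    {K : Set (ProbabilityMeasure M)} (hK : K.Nonempty) {x : M}
    (hx : ∀ ρ > (0:ℝ), ∃ N : ℕ, ∀ n ≥ N, ∃ ε₀ > (0:ℝ), ∀ ε : ℝ, 0 < ε → ε ≤ ε₀ →
      dstarSet dstar (S ε n x) K < ρ) :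
    ∀ ρ > (0:ℝ), ∀ᶠ n in atTop, dstarSet dstar (S0 n x) K ≤ ρ := by
  intro ρ hρ
  obtain ⟨N, hN⟩ := hx (ρ / 2) (by linarith)
  refine Filter.eventually_atTop.mpr ⟨max N 1, fun n hn => ?_⟩
  have hn1 : 1 ≤ n := le_trans (le_max_right _ _) hn
  obtain ⟨ε₀, hε₀, hSb⟩ := hN n (le_trans (le_max_left _ _) hn)
  have hev := eventually_dist_S_S0 hd hf hball hsph hP hL hS hS0 hn1 x
    (η := ρ / 2) (by linarith)
  have hIoc : Set.Ioc (0:ℝ) ε₀ ∈ nhdsWithin (0:ℝ) (Set.Ioi 0) :=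
    Ioc_mem_nhdsGT_of_mem ⟨le_refl 0, hε₀⟩
  obtain ⟨ε, hε1, hε2⟩ := (hev.and (Filter.eventually_iff_exists_mem.mpr
    ⟨Set.Ioc (0:ℝ) ε₀, hIoc, fun _ h => h⟩)).exists
  have h3 := hSb ε hε2.1 hε2.2
  have htri := dstarSet_triangle hd (S0 n x) (S ε n x) hK
  have hsymm : dstar (S0 n x) (S ε n x) = dstar (S ε n x) (S0 n x) := hd.2.1 _ _
  linarith

/-- Extract a positive `ε₀` from an eventually statement at `0⁺`. -/
lemma exists_eps_of_eventually {p : ℝ → Prop}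
    (h : ∀ᶠ ε in nhdsWithin (0:ℝ) (Set.Ioi 0), p ε) :
    ∃ ε₀ > (0:ℝ), ∀ ε : ℝ, 0 < ε → ε ≤ ε₀ → p ε := by
  obtain ⟨u, huo, hu0, hsub⟩ := mem_nhdsWithin.mp h
  obtain ⟨δ, hδ, hballs⟩ := Metric.isOpen_iff.mp huo 0 hu0
  refine ⟨δ / 2, by linarith, fun ε hε hεle => hsub ⟨hballs ?_, hε⟩⟩
  rw [Metric.mem_ball, Real.dist_eq]
  have : |ε - 0| = ε := by
    rw [sub_zero, abs_of_pos hε]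
  rw [this]
  linarith

end AuxConvergence
theorem statement_14 {M : Type*} [MetricSpace M] [CompactSpace M] [MeasurableSpace M]
    [BorelSpace M] (f : M → M) (hf : Continuous f)
    (m : Measure M) [IsFiniteMeasure m]
    (hball : ∀ (z : M) (r : ℝ), 0 < r → 0 < m (Metric.ball z r))
    (hsph : ∀ (z : M) (r : ℝ), m (Metric.sphere z r) = 0)
    (P : ℝ → M → ProbabilityMeasure M) (hP : IsTransitionKernel f m P)
    (Lop : ℝ → ProbabilityMeasure M → ProbabilityMeasure M) (hL : IsDualTransfer P Lop)
    (S : ℝ → ℕ → M → ProbabilityMeasure M) (hS : IsEmpiricStochastic Lop S)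
    (S0 : ℕ → M → ProbabilityMeasure M) (hS0 : IsEmpiricZeroNoise f S0)
    (dstar : ProbabilityMeasure M → ProbabilityMeasure M → ℝ) (hd : MetrizesWeakStar dstar) :
    ∀ K : Set (ProbabilityMeasure M), EmpStochStableSet f m dstar S K →
      ∀ μ ∈ K, PseudoPhysical f m dstar S0 μ := by
  intro K hKs μ₀ hμ₀
  obtain ⟨hKne, hKc, hKinv, ⟨A, hAm, hApos, hA⟩, hmin⟩ := hKs
  refine ⟨hKinv μ₀ hμ₀, ?_⟩
  intro ρ₀ hρ₀
  by_contra hWpos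
  have hW0 : m (weakBasin dstar S0 ρ₀ μ₀) = 0 := le_zero_iff.mp (not_lt.mp hWpos)
  set W := weakBasin dstar S0 ρ₀ μ₀ with hWdef
  -- every point of A satisfies the pointwise basin property for K
  have hAbasin : ∀ x ∈ A, ∀ ρ > (0:ℝ), ∃ N : ℕ, ∀ n ≥ N, ∃ ε₀ > (0:ℝ),
      ∀ ε : ℝ, 0 < ε → ε ≤ ε₀ → dstarSet dstar (S ε n x) K < ρ := by
    intro x hx ρ hρ
    obtain ⟨N, hN⟩ := hA ρ hρ
    refine ⟨N, fun n hn => ?_⟩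
    obtain ⟨ε₀, hε₀, h⟩ := hN n hn
    exact ⟨ε₀, hε₀, fun ε hε hεle => h ε hε hεle x hx⟩
  -- master lemma: basin property + not in the weak basin yields a limit measure in K far from μ₀
  have master : ∀ x : M, (∀ ρ > (0:ℝ), ∃ N : ℕ, ∀ n ≥ N, ∃ ε₀ > (0:ℝ),
        ∀ ε : ℝ, 0 < ε → ε ≤ ε₀ → dstarSet dstar (S ε n x) K < ρ) → x ∉ W →
      ∃ ν ∈ K, ρ₀ ≤ dstar ν μ₀ ∧ ν ∈ pOmega S0 x := by
    intro x hx hxW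
    have hto := eventually_dstarSet_S0 hd hf hball hsph hP hL hS hS0 hKne hx
    obtain ⟨ν, hνK, φ, hφ, hφ1, hφto⟩ := MW.extraction hd hKne hKc (fun n => S0 n x) hto
    have hνpω : ν ∈ pOmega S0 x := ⟨φ, hφ, hφ1, hφto⟩
    have hnl : ¬ dstar ν μ₀ < ρ₀ := fun hc => hxW ⟨ν, hνpω, hc⟩
    exact ⟨ν, hνK, not_lt.mp hnl, hνpω⟩
  set K' : Set (ProbabilityMeasure M) := K ∩ {ν | ρ₀ ≤ dstar ν μ₀} with hK'def
  -- a point of A outside W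
  have hAW : m (A \ W) ≠ 0 := by
    intro h0
    have hsubA : A ⊆ (A \ W) ∪ W := by
      intro a ha
      by_cases h : a ∈ W
      · exact Or.inr h
      · exact Or.inl ⟨ha, h⟩
    have hle : m A ≤ m (A \ W) + m W := le_trans (measure_mono hsubA) (measure_union_le _ _)
    rw [h0, hW0, add_zero] at hle
    exact absurd (le_antisymm hle (by simp)) hApos.ne'
  obtain ⟨xb, hxb⟩ := nonempty_of_measure_ne_zero hAW
  obtain ⟨νb, hνbK, hνbd, -⟩ := master xb (hAbasin xb hxb.1) hxb.2
  have hK'ne : K'.Nonempty := ⟨νb, hνbK, hνbd⟩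
  have hK'c : IsCompact K' := by
    have hclosed : IsClosed {ν : ProbabilityMeasure M | ρ₀ ≤ dstar ν μ₀} := by
      rw [← isOpen_compl_iff]
      have hcompl : {ν : ProbabilityMeasure M | ρ₀ ≤ dstar ν μ₀}ᶜ
          = {ν | dstar ν μ₀ < ρ₀} := by
        ext ν; simp [not_le]
      rw [hcompl, isOpen_iff_mem_nhds]
      intro ν hν
      simp only [Set.mem_setOf_eq] at hν
      have hr : 0 < ρ₀ - dstar ν μ₀ := by linarith
      refine Filter.mem_of_superset (MW.ball_mem_nhds hd ν hr) ?_
      intro τ hτ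
      simp only [Set.mem_setOf_eq] at hτ ⊢
      have htri := hd.2.2.1 τ ν μ₀
      linarith
    exact hKc.inter_right hclosed
  have hK'inv : ∀ μ ∈ K', IsInvariant f μ := fun μ hμ => hKinv μ hμ.1
  -- claim: points of the K-basin outside W lie in the K'-basin
  have claim2 : ∀ x : M, x ∈ empBasinSet dstar S K → x ∉ W → x ∈ empBasinSet dstar S K' := by
    intro x hx hxW
    have hxb' : ∀ ρ > (0:ℝ), ∃ N : ℕ, ∀ n ≥ N, ∃ ε₀ > (0:ℝ),
        ∀ ε : ℝ, 0 < ε → ε ≤ ε₀ → dstarSet dstar (S ε n x) K < ρ := hx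
    have hto := eventually_dstarSet_S0 hd hf hball hsph hP hL hS hS0 hKne hxb'
    obtain ⟨ν0, hν0K, hν0d, -⟩ := master x hxb' hxW
    have hK'ne' : K'.Nonempty := ⟨ν0, hν0K, hν0d⟩
    have hto' : ∀ ρ > (0:ℝ), ∀ᶠ n in atTop, dstarSet dstar (S0 n x) K' ≤ ρ := by
      intro ρ hρ
      by_contra hcon
      rw [Filter.not_eventually] at hcon
      have hfreq : ∃ᶠ n in atTop, ρ < dstarSet dstar (S0 n x) K' :=
        hcon.mono fun n hn => not_le.mp hn
      obtain ⟨ψ, hψmono, hψprop⟩ := Filter.extraction_of_frequently_atTop hfreq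
      have hu' : ∀ ρ' > (0:ℝ), ∀ᶠ i in atTop, dstarSet dstar (S0 (ψ i) x) K ≤ ρ' := by
        intro ρ' hρ'
        obtain ⟨N, hN⟩ := Filter.eventually_atTop.mp (hto ρ' hρ')
        exact Filter.eventually_atTop.mpr
          ⟨N, fun i hi => hN _ (le_trans hi hψmono.le_apply)⟩
      obtain ⟨ν, hνK, χ, hχmono, hχ1, hχto⟩ :=
        MW.extraction hd hKne hKc (fun i => S0 (ψ i) x) hu'
      have hνpω : ν ∈ pOmega S0 x :=
        ⟨fun i => ψ (χ i), hψmono.comp hχmono,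
          fun i => le_trans (hχ1 i) hψmono.le_apply, hχto⟩
      have hνK' : ν ∈ K' := ⟨hνK, not_lt.mp fun hc => hxW ⟨ν, hνpω, hc⟩⟩
      obtain ⟨i, hi⟩ := (MW.dist_of_tendsto hd hχto ρ hρ).exists
      have hle := dstarSet_le hd (S0 (ψ (χ i)) x) hνK'
      have hgt := hψprop (χ i)
      linarith
    intro ρ hρ
    obtain ⟨N₀, hN₀⟩ := Filter.eventually_atTop.mp (hto' (ρ / 4) (by linarith))
    refine ⟨max N₀ 1, fun n hn => ?_⟩
    have hn1 : 1 ≤ n := le_trans (le_max_right _ _) hn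
    have hd0 : dstarSet dstar (S0 n x) K' ≤ ρ / 4 := hN₀ n (le_trans (le_max_left _ _) hn)
    have hev := eventually_dist_S_S0 hd hf hball hsph hP hL hS hS0 hn1 x
      (η := ρ / 4) (by linarith)
    obtain ⟨ε₀, hε₀, hprop⟩ := exists_eps_of_eventually hev
    refine ⟨ε₀, hε₀, fun ε hε hεle => ?_⟩
    have h1 := hprop ε hε hεle
    have htri := dstarSet_triangle hd (S ε n x) (S0 n x) hK'ne'
    linarith
  have hdiff : m (empBasinSet dstar S K \ empBasinSet dstar S K') = 0 := by
    apply measure_mono_null _ hW0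
    intro x hx
    by_contra hxW
    exact hx.2 (claim2 x hx.1 hxW)
  have hsub := hmin K' hK'ne hK'c hK'inv hdiff
  have hcontra := (hsub hμ₀).2
  rw [Set.mem_setOf_eq, MW.self hd] at hcontra
  linarith

end EmpStoch
end
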